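/- arXiv:2601.20853 — 2 statements merged into one kernel-verified Lean document; each statement's English description precedes it below -/
import Mathlib

section
/- Argmax consistency (van der Vaart Theorem 5.7 specialization): let Q_n : Θ → ℝ be random functions and Q : Θ → ℝ deterministic on a compact metric space Θ, with sup_{θ∈Θ}|Q_n(θ) − Q(θ)| →_p 0 and for every ε > 0, inf{Q(θ) : d(θ, θ₀) ≥ ε} > Q(θ₀). If θ̂_n ∈ Θ satisfies Q_n(θ̂_n) ≤ inf_{θ∈Θ} Q_n(θ) + o_p(1), then d(θ̂_n, θ₀) →_p 0. -/
open MeasureTheory Filter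

/-- Argmax (here: argmin) consistency, van der Vaart Theorem 5.7
specialization: uniform convergence in probability of `Q_n` to `Q` plus a
well-separated minimum of `Q` at `θ₀` imply that near-minimizers `θ̂_n` of `Q_n`
converge in probability to `θ₀`. -/
theorem argmin_consistency
    {Θ : Type*} [MetricSpace Θ] [CompactSpace Θ]
    {Ω : Type*} [MeasurableSpace Ω] (μ : Measure Ω) [IsProbabilityMeasure μ]
    (Qn : ℕ → Ω → Θ → ℝ) (Q : Θ → ℝ) (θ₀ : Θ)
    -- uniform convergence in probability
    (hunif : ∀ ε > (0 : ℝ),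
      Tendsto (fun n => μ {ω | ∃ θ, ε ≤ |Qn n ω θ - Q θ|}) atTop (nhds 0))
    -- well-separated minimum
    (hsep : ∀ ε > (0 : ℝ), ∃ c > (0 : ℝ), ∀ θ, ε ≤ dist θ θ₀ → Q θ₀ + c ≤ Q θ)
    -- near-minimizers: Q_n(θ̂_n) ≤ inf_θ Q_n(θ) + o_p(1)
    (that : ℕ → Ω → Θ)
    (R : ℕ → Ω → ℝ)
    (hR : ∀ ε > (0 : ℝ), Tendsto (fun n => μ {ω | ε ≤ |R n ω|}) atTop (nhds 0))
    (hnear : ∀ n ω θ, Qn n ω (that n ω) ≤ Qn n ω θ + R n ω) :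
    ∀ ε > (0 : ℝ),
      Tendsto (fun n => μ {ω | ε ≤ dist (that n ω) θ₀}) atTop (nhds 0) := by
  intro ε hε
  obtain ⟨c, hc, hsepc⟩ := hsep ε hε
  have hc3 : (0:ℝ) < c/3 := by linarith
  have hsub : ∀ n, {ω | ε ≤ dist (that n ω) θ₀} ⊆
      {ω | ∃ θ, c/3 ≤ |Qn n ω θ - Q θ|} ∪ {ω | c/3 ≤ |R n ω|} := by
    intro n ω hω
    by_contra h
    simp only [Set.mem_union, Set.mem_setOf_eq, not_or, not_exists, not_le] at h
    obtain ⟨h1, h2⟩ := h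
    have hQhat := hsepc (that n ω) hω
    have e1 := h1 (that n ω)
    have e2 := h1 θ₀
    have e3 := hnear n ω θ₀
    rw [abs_lt] at e1 e2 h2
    linarith
  have hbound : ∀ n, μ {ω | ε ≤ dist (that n ω) θ₀} ≤
      μ {ω | ∃ θ, c/3 ≤ |Qn n ω θ - Q θ|} + μ {ω | c/3 ≤ |R n ω|} := fun n =>
    le_trans (measure_mono (hsub n)) (measure_union_le _ _)
  have hsum : Tendsto (fun n => μ {ω | ∃ θ, c/3 ≤ |Qn n ω θ - Q θ|}
      + μ {ω | c/3 ≤ |R n ω|}) atTop (nhds 0) := by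
    simpa using (hunif (c/3) hc3).add (hR (c/3) hc3)
  exact tendsto_of_tendsto_of_tendsto_of_le_of_le tendsto_const_nhds hsum
    (fun n => zero_le) hbound
end

section
/- Efficiency of the optimal GMM weighting: for any k×p matrix G of full column rank and symmetric positive definite matrices W, Σ (k×k), the matrix (G^⊤ W G)^{-1} G^⊤ W Σ W G (G^⊤ W G)^{-1} − (G^⊤ Σ^{-1} G)^{-1} is positive semidefinite. -/
open Matrix

section Aux

lemma aux_mulVec_inj {k p : ℕ} (G : Matrix (Fin k) (Fin p) ℝ) (hG : G.rank = p) :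
    ∀ v, G *ᵥ v = 0 → v = 0 := by
  rw [← Matrix.ker_mulVecLin_eq_bot_iff]
  have h := LinearMap.finrank_range_add_finrank_ker G.mulVecLin
  rw [show Module.finrank ℝ (LinearMap.range G.mulVecLin) = G.rank from rfl, hG,
    Module.finrank_fintype_fun_eq_card, Fintype.card_fin] at h
  have hker : Module.finrank ℝ (LinearMap.ker G.mulVecLin) = 0 := by omega
  exact Submodule.finrank_eq_zero.mp hker

lemma aux_posdef {k p : ℕ} (G : Matrix (Fin k) (Fin p) ℝ) (hG : G.rank = p)
    {M : Matrix (Fin k) (Fin k) ℝ} (hM : M.PosDef) : (Gᵀ * M * G).PosDef := by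
  have hGT : Gᴴ = Gᵀ := conjTranspose_eq_transpose_of_trivial G
  refine PosDef.of_dotProduct_mulVec_pos ?_ ?_
  · rw [← hGT]; exact isHermitian_conjTranspose_mul_mul G hM.1
  · intro x hx
    have hGx : G *ᵥ x ≠ 0 := fun h => hx (aux_mulVec_inj G hG x h)
    have := hM.dotProduct_mulVec_pos hGx
    simpa only [← hGT, star_mulVec, dotProduct_mulVec, vecMul_vecMul] using this

end Aux

/-- Efficiency of the optimal GMM weighting: for any full-column-rank `G`
and symmetric positive definite `W`, `Sig`, the difference
`(GᵀWG)⁻¹ GᵀWΣWG (GᵀWG)⁻¹ − (GᵀΣ⁻¹G)⁻¹` is positive semidefinite. -/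
theorem optimal_weighting_efficiency
    {k p : ℕ} (hpk : p ≤ k)
    (G : Matrix (Fin k) (Fin p) ℝ) (hG : G.rank = p)
    (W : Matrix (Fin k) (Fin k) ℝ) (hWsymm : W.IsSymm) (hWpd : W.PosDef)
    (Sig : Matrix (Fin k) (Fin k) ℝ) (hSsymm : Sig.IsSymm) (hSpd : Sig.PosDef) :
    ((Gᵀ * W * G)⁻¹ * (Gᵀ * W * Sig * W * G) * (Gᵀ * W * G)⁻¹
      - (Gᵀ * Sig⁻¹ * G)⁻¹).PosSemidef := by
  have hSipd : (Sig⁻¹).PosDef := hSpd.inv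
  set A := Gᵀ * W * G with hA
  set B := Gᵀ * Sig⁻¹ * G with hB
  have hApd : A.PosDef := aux_posdef G hG hWpd
  have hBpd : B.PosDef := aux_posdef G hG hSipd
  have hAdet : IsUnit A.det := hApd.det_pos.ne'.isUnit
  have hBdet : IsUnit B.det := hBpd.det_pos.ne'.isUnit
  have hSdet : IsUnit Sig.det := hSpd.det_pos.ne'.isUnit
  have hAinv : A⁻¹ * A = 1 := nonsing_inv_mul A hAdet
  have hAinv' : A * A⁻¹ = 1 := mul_nonsing_inv A hAdet
  have hBinv : B⁻¹ * B = 1 := nonsing_inv_mul B hBdet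
  have hBinv' : B * B⁻¹ = 1 := mul_nonsing_inv B hBdet
  have hSinv : Sig⁻¹ * Sig = 1 := nonsing_inv_mul Sig hSdet
  have hSinv' : Sig * Sig⁻¹ = 1 := mul_nonsing_inv Sig hSdet
  -- symmetry facts
  have hAsymm : Aᵀ = A := by
    rw [hA, transpose_mul, transpose_mul, transpose_transpose, hWsymm.eq, ← Matrix.mul_assoc]
  have hSit : (Sig⁻¹)ᵀ = Sig⁻¹ := by rw [transpose_nonsing_inv, hSsymm.eq]
  have hBsymm : Bᵀ = B := by
    rw [hB, transpose_mul, transpose_mul, transpose_transpose, hSit, ← Matrix.mul_assoc]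
  have hAit : (A⁻¹)ᵀ = A⁻¹ := by rw [transpose_nonsing_inv, hAsymm]
  have hBit : (B⁻¹)ᵀ = B⁻¹ := by rw [transpose_nonsing_inv, hBsymm]
  set D := A⁻¹ * Gᵀ * W - B⁻¹ * Gᵀ * Sig⁻¹ with hD
  have hDT : Dᵀ = W * G * A⁻¹ - Sig⁻¹ * G * B⁻¹ := by
    rw [hD]
    simp only [transpose_sub, transpose_mul, transpose_transpose, hWsymm.eq, hSit, hAit, hBit,
      Matrix.mul_assoc]
  have c1 : ∀ X : Matrix (Fin k) (Fin p) ℝ, Sig * (Sig⁻¹ * X) = X :=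
    fun X => mul_nonsing_inv_cancel_left Sig X hSdet
  have c2 : ∀ X : Matrix (Fin k) (Fin p) ℝ, Sig⁻¹ * (Sig * X) = X :=
    fun X => nonsing_inv_mul_cancel_left Sig X hSdet
  have e2 : A⁻¹ * (Gᵀ * (W * (G * B⁻¹))) = B⁻¹ := by
    have i2 : Gᵀ * (W * (G * B⁻¹)) = A * B⁻¹ := by
      rw [hA]; simp only [Matrix.mul_assoc]
    rw [i2, nonsing_inv_mul_cancel_left A B⁻¹ hAdet]
  have e3 : B⁻¹ * (Gᵀ * (W * (G * A⁻¹))) = B⁻¹ := by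
    have i3 : Gᵀ * (W * (G * A⁻¹)) = A * A⁻¹ := by
      rw [hA]; simp only [Matrix.mul_assoc]
    rw [i3, hAinv', Matrix.mul_one]
  have e4 : B⁻¹ * (Gᵀ * (Sig⁻¹ * (G * B⁻¹))) = B⁻¹ := by
    have i4 : Gᵀ * (Sig⁻¹ * (G * B⁻¹)) = B * B⁻¹ := by
      rw [hB]; simp only [Matrix.mul_assoc]
    rw [i4, hBinv', Matrix.mul_one]
  have key : D * Sig * Dᵀ =
      A⁻¹ * (Gᵀ * W * Sig * W * G) * A⁻¹ - B⁻¹ := by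
    rw [hDT, hD]
    simp only [Matrix.sub_mul, Matrix.mul_sub, Matrix.mul_assoc, c1, c2]
    rw [e2, e3, e4]
    abel
  have := hSpd.posSemidef.mul_mul_conjTranspose_same D
  rw [conjTranspose_eq_transpose_of_trivial, key] at this
  exact this
end
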